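/- Let p be a prime, q = p^α a prime power, k ≥ 2, and L ⊊ {0,...,q-1} nonempty. Let F ⊆ 2^[n] satisfy: |E| mod q ∉ L for every E ∈ F; |F_1 ∩ ... ∩ F_k| mod q ∈ L for any k distinct sets from F; and there exists an integer t ≤ q-1 such that |E| mod q ∈ {q-t,...,q-1} for each E ∈ F. Then |F| ≤ (k-1) Σ_{j=q-t}^{q-1} C(n, j). -/

import Mathlib

open Finset


lemma cast_choose_mod {p : ℕ} (hp : p.Prime) (α : ℕ) {j : ℕ} (hj : j < p ^ α) (M : ℕ) :
    ((M.choose j : ZMod p)) = (((M % p ^ α).choose j : ZMod p)) := by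
  set q := p ^ α with hqdef
  have hq1 : 0 < q := pow_pos hp.pos α
  induction M using Nat.strong_induction_on with
  | _ M ih =>
    rcases lt_or_ge M q with h | h
    · rw [Nat.mod_eq_of_lt h]
    · have key : (((M - q) + q).choose j : ZMod p) = (((M - q).choose j : ZMod p)) := by
        rw [Nat.add_choose_eq]
        push_cast
        rw [Finset.sum_eq_single ((j, 0) : ℕ × ℕ)]
        · simp
        · rintro ⟨i1, i2⟩ hmem hne
          have hsum : i1 + i2 = j := Finset.HasAntidiagonal.mem_antidiagonal.mp hmem
          have hi2 : i2 ≠ 0 := by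
            rintro rfl
            exact hne (by simpa using congrArg (fun x => ((x, 0) : ℕ × ℕ)) (by omega : i1 = j))
          have hi2q : i2 ≠ q := by omega
          have hz : (q.choose i2 : ZMod p) = 0 := by
            rw [ZMod.natCast_eq_zero_iff]
            exact hp.dvd_choose_pow hi2 hi2q
          simp [hz]
        · intro h
          exact absurd (Finset.HasAntidiagonal.mem_antidiagonal.mpr (by simp)) h
      have h1 : M - q + q = M := by omega
      have h2 : M % q = (M - q) % q := by
        conv_lhs => rw [← h1]
        rw [Nat.add_mod_right]
      calc (M.choose j : ZMod p) = (((M - q) + q).choose j : ZMod p) := by rw [h1]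
        _ = (((M - q)).choose j : ZMod p) := key
        _ = ((((M - q)) % q).choose j : ZMod p) := ih (M - q) (by omega)
        _ = ((M % q).choose j : ZMod p) := by rw [h2]


lemma exists_coeffs (F : Type*) [Field F] (s : Finset ℕ) (tar : ℕ → F) :
    ∃ c : ℕ → F, ∀ r ∈ s, ∑ j ∈ s, c j * (r.choose j : F) = tar r := by
  classical
  let T : (↥s → F) →ₗ[F] (↥s → F) :=
    { toFun := fun c r => ∑ j : ↥s, c j * ((r : ℕ).choose (j : ℕ) : F)
      map_add' := fun x y => by
        funext r
        simp only [Pi.add_apply, add_mul, Finset.sum_add_distrib]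
      map_smul' := fun m x => by
        funext r
        simp only [Pi.smul_apply, smul_eq_mul, RingHom.id_apply, Finset.mul_sum, mul_assoc] }
  have hker : ∀ c, T c = 0 → c = 0 := by
    intro c hc
    by_contra hne
    have hex : ∃ j : ↥s, c j ≠ 0 := by
      by_contra hall
      push_neg at hall
      exact hne (funext hall)
    obtain ⟨j1, hj1⟩ := hex
    obtain ⟨j0, hj0mem, hj0min⟩ := Finset.exists_min_image
      (Finset.univ.filter fun j : ↥s => c j ≠ 0) (fun j => (j : ℕ)) ⟨j1, by simp [hj1]⟩
    have hj0 : c j0 ≠ 0 := (Finset.mem_filter.mp hj0mem).2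
    have hval := congrFun hc j0
    simp only [T, LinearMap.coe_mk, AddHom.coe_mk, Pi.zero_apply] at hval
    have hsum : ∑ j : ↥s, c j * (((j0 : ℕ)).choose (j : ℕ) : F) = c j0 := by
      rw [Finset.sum_eq_single j0]
      · simp
      · intro j _ hne'
        rcases lt_trichotomy (j : ℕ) (j0 : ℕ) with h | h | h
        · have hz : c j = 0 := by
            by_contra hcj
            have := hj0min j (by simp [hcj])
            omega
          simp [hz]
        · exact absurd (Subtype.ext h) hne'
        · rw [Nat.choose_eq_zero_of_lt h]
          simp
      · intro h
        exact absurd (Finset.mem_univ j0) h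
    rw [hsum] at hval
    exact hj0 hval
  have hinj : Function.Injective T := by
    rw [← LinearMap.ker_eq_bot]
    exact LinearMap.ker_eq_bot'.mpr hker
  have hsurj : Function.Surjective T := LinearMap.injective_iff_surjective.mp hinj
  obtain ⟨c', hc'⟩ := hsurj fun r => tar r
  refine ⟨fun j => if h : j ∈ s then c' ⟨j, h⟩ else 0, fun r hr => ?_⟩
  have hval := congrFun hc' ⟨r, hr⟩
  simp only [T, LinearMap.coe_mk, AddHom.coe_mk] at hval
  rw [← hval]
  rw [← Finset.sum_attach s (fun j => (if h : j ∈ s then c' ⟨j, h⟩ else 0) * (r.choose j : F))]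
  rw [show (Finset.univ : Finset ↥s) = s.attach from rfl]
  refine Finset.sum_congr rfl fun x _ => ?_
  rw [dif_pos x.2]


lemma card_filter_card_mem (n : ℕ) (s : Finset ℕ) :
    (Finset.univ.filter fun B : Finset (Fin n) => B.card ∈ s).card = ∑ j ∈ s, n.choose j := by
  classical
  have hEq : (Finset.univ.filter fun B : Finset (Fin n) => B.card ∈ s)
      = s.biUnion fun j => Finset.powersetCard j (Finset.univ : Finset (Fin n)) := by
    ext B
    rw [Finset.mem_filter, Finset.mem_biUnion]
    constructor
    · intro h
      exact ⟨B.card, h.2, Finset.mem_powersetCard.mpr ⟨Finset.subset_univ _, rfl⟩⟩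
    · rintro ⟨j, hj, hBj⟩
      exact ⟨Finset.mem_univ _, (Finset.mem_powersetCard.mp hBj).2 ▸ hj⟩
  rw [hEq, Finset.card_biUnion]
  · refine Finset.sum_congr rfl fun j _ => ?_
    simp [Finset.card_powersetCard]
  · intro a _ b _ hab
    simp only [Function.onFun]
    rw [Finset.disjoint_left]
    intro B hB hB'
    rw [Finset.mem_powersetCard] at hB hB'
    exact hab (hB.2 ▸ hB'.2.symm ▸ rfl)

section Vec

variable (p n a q : ℕ)

def uvec (c : ℕ → ZMod p) (A : Finset (Fin n)) :
    {B : Finset (Fin n) // B.card ∈ Finset.Ico a q} → ZMod p :=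
  fun x => if x.1 ⊆ A then c x.1.card else 0

def evmap (C : Finset (Fin n)) :
    ({B : Finset (Fin n) // B.card ∈ Finset.Ico a q} → ZMod p) →ₗ[ZMod p] ZMod p where
  toFun v := ∑ x : {B : Finset (Fin n) // B.card ∈ Finset.Ico a q}, if x.1 ⊆ C then v x else 0
  map_add' v w := by
    rw [← Finset.sum_add_distrib]
    exact Finset.sum_congr rfl fun x _ => by split_ifs <;> simp
  map_smul' m v := by
    simp only [Pi.smul_apply, smul_eq_mul, RingHom.id_apply]
    rw [Finset.mul_sum]
    exact Finset.sum_congr rfl fun x _ => by split_ifs <;> simp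

lemma evmap_uvec (c : ℕ → ZMod p) (A C : Finset (Fin n)) :
    evmap p n a q C (uvec p n a q c A)
      = ∑ j ∈ Finset.Ico a q, c j * (((A ∩ C).card).choose j : ZMod p) := by
  classical
  have step1 : evmap p n a q C (uvec p n a q c A)
      = ∑ x : {B : Finset (Fin n) // B.card ∈ Finset.Ico a q},
          if x.1 ⊆ A ∩ C then c x.1.card else 0 := by
    simp only [evmap, LinearMap.coe_mk, AddHom.coe_mk, uvec]
    refine Finset.sum_congr rfl fun x _ => ?_
    by_cases h1 : x.1 ⊆ C <;> by_cases h2 : x.1 ⊆ A <;>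
      simp [h1, h2, Finset.subset_inter_iff]
  have step2 : ∑ x : {B : Finset (Fin n) // B.card ∈ Finset.Ico a q},
          (if x.1 ⊆ A ∩ C then c x.1.card else 0)
      = ∑ B ∈ Finset.univ.filter (fun B : Finset (Fin n) => B.card ∈ Finset.Ico a q),
          (if B ⊆ A ∩ C then c B.card else 0) :=
    (Finset.sum_subtype (p := fun B : Finset (Fin n) => B.card ∈ Finset.Ico a q)
      _ (fun B => by simp) (fun B => if B ⊆ A ∩ C then c B.card else 0)).symm
  rw [step1, step2, Finset.sum_filter]
  have step3 : ∀ B : Finset (Fin n),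
      (if B.card ∈ Finset.Ico a q then (if B ⊆ A ∩ C then c B.card else 0) else 0)
        = (if B ⊆ A ∩ C then (if B.card ∈ Finset.Ico a q then c B.card else 0) else 0) :=
    fun B => by split_ifs <;> rfl
  rw [Finset.sum_congr rfl fun B _ => step3 B, ← Finset.sum_filter]
  have step4 : Finset.univ.filter (fun B : Finset (Fin n) => B ⊆ A ∩ C) = (A ∩ C).powerset := by
    ext B
    rw [Finset.mem_filter, Finset.mem_powerset]
    exact ⟨fun h => h.2, fun h => ⟨Finset.mem_univ _, h⟩⟩
  rw [step4]
  rw [Finset.sum_powerset_apply_card (fun m => if m ∈ Finset.Ico a q then c m else 0)]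
  have step5 : ∀ m ∈ Finset.range ((A ∩ C).card + 1),
      ((A ∩ C).card.choose m) • (if m ∈ Finset.Ico a q then c m else 0)
        = (if m ∈ Finset.Ico a q then c m * (((A ∩ C).card).choose m : ZMod p) else 0) := by
    intro m _
    split_ifs <;> simp [nsmul_eq_mul, mul_comm]
  rw [Finset.sum_congr rfl step5, Finset.sum_ite_mem]
  have step6 : ∑ j ∈ Finset.Ico a q, c j * (((A ∩ C).card).choose j : ZMod p)
      = ∑ j ∈ Finset.Ico a q, (if j ∈ Finset.range ((A ∩ C).card + 1)
          then c j * (((A ∩ C).card).choose j : ZMod p) else 0) := by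
    refine Finset.sum_congr rfl fun j hj => ?_
    by_cases h : j ∈ Finset.range ((A ∩ C).card + 1)
    · rw [if_pos h]
    · rw [if_neg h]
      have : (A ∩ C).card < j := by
        simp only [Finset.mem_range] at h
        omega
      rw [Nat.choose_eq_zero_of_lt this]
      simp
  rw [step6, Finset.sum_ite_mem, Finset.inter_comm]

end Vec


lemma span_eval {F : Type*} [Field F] {V : Type*} [AddCommGroup V] [Module F V]
    (φ : V →ₗ[F] F) (vset : Set V) (v : V) (hv : v ∈ Submodule.span F vset)
    (hφ : φ v ≠ 0) : ∃ w ∈ vset, φ w ≠ 0 := by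
  by_contra h
  push_neg at h
  have hsub : vset ⊆ (LinearMap.ker φ : Set V) := fun w hw => LinearMap.mem_ker.mpr (h w hw)
  have hle := Submodule.span_le.mpr hsub
  exact hφ (LinearMap.mem_ker.mp (hle hv))

lemma exists_layer (F : Type*) [Field F] {V ι : Type*} [AddCommGroup V] [Module F V]
    [Module.Finite F V] [DecidableEq ι] (u : ι → V) (D : ℕ)
    (hD : Module.finrank F V ≤ D) (𝓖 : Finset ι) :
    ∃ I : Finset ι, I ⊆ 𝓖 ∧ I.card ≤ D ∧
      ∀ A ∈ 𝓖, A ∉ I → u A ∈ Submodule.span F (u '' ↑I) := by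
  classical
  obtain ⟨Iset, hind, hspan⟩ := exists_maximal_linearIndepOn F (fun x : ↥𝓖 => u x.1)
  haveI : Fintype ↥Iset := Set.Finite.fintype (Set.toFinite Iset)
  refine ⟨(Iset.toFinset).map ⟨Subtype.val, Subtype.val_injective⟩, ?_, ?_, ?_⟩
  · intro x hx
    simp only [Finset.mem_map, Set.mem_toFinset, Function.Embedding.coeFn_mk] at hx
    obtain ⟨y, _, rfl⟩ := hx
    exact y.2
  · rw [Finset.card_map, Set.toFinset_card]
    exact (LinearIndependent.fintype_card_le_finrank hind).trans hD
  · intro A hA hAI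
    have himg : u '' ↑((Iset.toFinset).map ⟨Subtype.val, Subtype.val_injective⟩)
        = (fun x : ↥𝓖 => u x.1) '' Iset := by
      ext w
      simp only [Finset.coe_map, Set.image_image, Set.mem_image, Set.mem_toFinset,
        Function.Embedding.coeFn_mk, Finset.mem_coe]
    rw [himg]
    have hmem : (⟨A, hA⟩ : ↥𝓖) ∉ Iset := by
      intro hc
      exact hAI (by simp only [Finset.mem_map, Set.mem_toFinset,
        Function.Embedding.coeFn_mk]; exact ⟨⟨A, hA⟩, hc, rfl⟩)
    obtain ⟨a, ha, hmem'⟩ := hspan ⟨A, hA⟩ hmem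
    have := Submodule.smul_mem _ a⁻¹ hmem'
    rwa [smul_smul, inv_mul_cancel₀ ha, one_smul] at this

/-- Theorem main4: a `k`-wise `q`-modular `L`-avoiding `L`-intersecting family whose
member sizes are all `≡ q-t, ..., q-1 (mod q)` has size at most
`(k-1) Σ_{j=q-t}^{q-1} C(n,j)`. -/
theorem stmt9 (p α n k : ℕ) (hp : p.Prime) (hα : 1 ≤ α) (q : ℕ) (hq : q = p ^ α)
    (hk : 2 ≤ k) (L : Finset ℕ) (hL : L ⊂ Finset.range q) (hLne : L.Nonempty)
    (t : ℕ) (ht : t ≤ q - 1)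
    (𝓕 : Finset (Finset (Fin n)))
    (havoid : ∀ E ∈ 𝓕, E.card % q ∉ L)
    (hint : ∀ S : Finset (Finset (Fin n)), S ⊆ 𝓕 → S.card = k → (S.inf id).card % q ∈ L)
    (hsize : ∀ E ∈ 𝓕, E.card % q ∈ Finset.Ico (q - t) q) :
    𝓕.card ≤ (k - 1) * ∑ j ∈ Finset.Ico (q - t) q, n.choose j := by
  classical
  haveI : Fact p.Prime := ⟨hp⟩
  subst hq
  set q := p ^ α with hqdef
  have hq1 : 1 < q := by
    have h1 := hp.one_lt
    have h2 : p ^ 1 ≤ p ^ α := Nat.pow_le_pow_right hp.pos hα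
    rw [pow_one] at h2
    omega
  set a := q - t with hadef
  set D := ∑ j ∈ Finset.Ico a q, n.choose j with hDdef
  by_contra hcon
  push_neg at hcon
  obtain ⟨c, hc⟩ := exists_coeffs (ZMod p) (Finset.Ico a q) (fun r => if r ∈ L then 0 else 1)
  set ρ : ℕ → ZMod p := fun r => ∑ j ∈ Finset.Ico a q, c j * (r.choose j : ZMod p) with hρdef
  have hev : ∀ A C : Finset (Fin n),
      evmap p n a q C (uvec p n a q c A) = ρ ((A ∩ C).card % q) := by
    intro A C
    rw [evmap_uvec, hρdef]
    refine Finset.sum_congr rfl fun j hj => ?_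
    have hj2 : j < q := (Finset.mem_Ico.mp hj).2
    have hcm := cast_choose_mod hp α (show j < p ^ α from hqdef ▸ hj2) ((A ∩ C).card)
    rw [← hqdef] at hcm
    rw [hcm]
  have hρL : ∀ m : ℕ, m % q ∈ L → ρ (m % q) = 0 := by
    intro m hm
    have hlt : m % q < q := Nat.mod_lt _ (by omega)
    by_cases hIco : m % q ∈ Finset.Ico a q
    · rw [hρdef]
      simp only
      rw [hc _ hIco, if_pos hm]
    · have hlta : m % q < a := by
        simp only [Finset.mem_Ico] at hIco
        omega
      rw [hρdef]
      refine Finset.sum_eq_zero fun j hj => ?_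
      have hlt2 : m % q < j := by
        simp only [Finset.mem_Ico] at hj
        omega
      rw [Nat.choose_eq_zero_of_lt hlt2]
      simp
  have hρgood : ∀ E ∈ 𝓕, ρ (E.card % q) = 1 := by
    intro E hE
    rw [hρdef]
    simp only
    rw [hc _ (hsize E hE), if_neg (havoid E hE)]
  have hfin : Module.finrank (ZMod p)
      ({B : Finset (Fin n) // B.card ∈ Finset.Ico a q} → ZMod p) = D := by
    rw [Module.finrank_pi, Fintype.card_subtype]
    exact card_filter_card_mem n (Finset.Ico a q)
  -- layer extraction
  have rec' : ∀ j : ℕ, ∃ (Is : ℕ → Finset (Finset (Fin n))) (R : Finset (Finset (Fin n))),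
      R ⊆ 𝓕 ∧ (∀ r < j, Is r ⊆ 𝓕) ∧
      (∀ r, r < j → ∀ r', r' < j → r ≠ r' → Disjoint (Is r) (Is r')) ∧
      (∀ r < j, (Is r).card ≤ D) ∧
      (∀ r < j, ∀ A ∈ R, A ∉ Is r ∧
        uvec p n a q c A ∈ Submodule.span (ZMod p) (uvec p n a q c '' ↑(Is r))) ∧
      𝓕.card ≤ R.card + j * D := by
    intro j
    induction j with
    | zero =>
      refine ⟨fun _ => ∅, 𝓕, Finset.Subset.refl _, fun r hr => absurd hr (by omega),
        fun r hr => absurd hr (by omega), fun r hr => absurd hr (by omega),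
        fun r hr => absurd hr (by omega), by simp⟩
    | succ j ih =>
      obtain ⟨Is, R, hR𝓕, hIs𝓕, hdisj, hcard, hprop, hbound⟩ := ih
      obtain ⟨I', hI'R, hI'card, hI'span⟩ :=
        exists_layer (ZMod p) (uvec p n a q c) D (le_of_eq hfin) R
      refine ⟨Function.update Is j I', R \ I', Finset.Subset.trans (Finset.sdiff_subset) hR𝓕,
        ?_, ?_, ?_, ?_, ?_⟩
      · intro r hr
        rcases eq_or_ne r j with rfl | hne
        · rw [Function.update_self]
          exact Finset.Subset.trans hI'R hR𝓕
        · rw [Function.update_of_ne hne]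
          exact hIs𝓕 r (by omega)
      · intro r hr r' hr' hne
        by_cases h1 : r = j
        · by_cases h2 : r' = j
          · exact absurd (h1.trans h2.symm) hne
          · rw [h1, Function.update_self, Function.update_of_ne h2]
            rw [Finset.disjoint_left]
            intro x hx hx'
            exact (hprop r' (by omega) x (hI'R hx)).1 hx'
        · by_cases h2 : r' = j
          · rw [h2, Function.update_self, Function.update_of_ne h1]
            rw [Finset.disjoint_right]
            intro x hx hx'
            exact (hprop r (by omega) x (hI'R hx)).1 hx'
          · rw [Function.update_of_ne h1, Function.update_of_ne h2]
            exact hdisj r (by omega) r' (by omega) hne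
      · intro r hr
        rcases eq_or_ne r j with rfl | hne
        · rw [Function.update_self]
          exact hI'card
        · rw [Function.update_of_ne hne]
          exact hcard r (by omega)
      · intro r hr A hA
        have hAR : A ∈ R := (Finset.mem_sdiff.mp hA).1
        have hAnI' : A ∉ I' := (Finset.mem_sdiff.mp hA).2
        rcases eq_or_ne r j with rfl | hne
        · rw [Function.update_self]
          exact ⟨hAnI', hI'span A hAR hAnI'⟩
        · rw [Function.update_of_ne hne]
          exact hprop r (by omega) A hAR
      · have h1 : (R \ I').card = R.card - I'.card := Finset.card_sdiff_of_subset hI'R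
        have h2 : I'.card ≤ R.card := Finset.card_le_card hI'R
        have h3 : (j + 1) * D = j * D + D := by ring
        omega
  obtain ⟨Is, R, hR𝓕, hIs𝓕, hdisj, hIscard, hprop, hbound⟩ := rec' (k - 1)
  have hRpos : 0 < R.card := by
    have h3 := lt_of_lt_of_le hcon hbound
    omega
  obtain ⟨A, hAR⟩ := Finset.card_pos.mp hRpos
  have hA𝓕 : A ∈ 𝓕 := hR𝓕 hAR
  have chain : ∀ j, j ≤ k - 1 → ∃ T : Finset (Finset (Fin n)),
      T.card = j + 1 ∧ A ∈ T ∧ (∀ B ∈ T, B = A ∨ ∃ r, r < j ∧ B ∈ Is r) ∧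
      evmap p n a q (T.inf id) (uvec p n a q c A) ≠ 0 := by
    intro j
    induction j with
    | zero =>
      intro _
      refine ⟨{A}, by simp, Finset.mem_singleton_self A, ?_, ?_⟩
      · intro B hB
        left
        exact Finset.mem_singleton.mp hB
      · rw [Finset.inf_singleton, id_eq, hev A A, Finset.inter_self, hρgood A hA𝓕]
        exact one_ne_zero
    | succ j ihj =>
      intro hj1
      obtain ⟨T, hTcard, hAT, hTmem, hTev⟩ := ihj (by omega)
      have hjk : j < k - 1 := by omega
      have hAprop := hprop j hjk A hAR
      have hPA : T.inf id ⊆ A := Finset.inf_le (f := id) hAT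
      obtain ⟨w, hw, hwev⟩ := span_eval (evmap p n a q (T.inf id)) _ _ hAprop.2 hTev
      obtain ⟨B, hBIs, rfl⟩ := hw
      rw [Finset.mem_coe] at hBIs
      have hBT : B ∉ T := by
        intro hBT
        rcases hTmem B hBT with rfl | ⟨r, hr, hBr⟩
        · exact hAprop.1 hBIs
        · exact (Finset.disjoint_left.mp
            (hdisj r (by omega) j (by omega) (by omega)) hBr) hBIs
      refine ⟨insert B T, ?_, Finset.mem_insert_of_mem hAT, ?_, ?_⟩
      · rw [Finset.card_insert_of_notMem hBT, hTcard]
      · intro B' hB'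
        rcases Finset.mem_insert.mp hB' with rfl | hB'T
        · exact Or.inr ⟨j, by omega, hBIs⟩
        · rcases hTmem B' hB'T with h | ⟨r, hr, h⟩
          · exact Or.inl h
          · exact Or.inr ⟨r, by omega, h⟩
      · rw [Finset.inf_insert, id_eq, Finset.inf_eq_inter, hev]
        have hsub2 : B ∩ T.inf id ⊆ A := Finset.Subset.trans (Finset.inter_subset_right) hPA
        rw [Finset.inter_eq_right.mpr hsub2]
        rw [hev B (T.inf id)] at hwev
        exact hwev
  obtain ⟨T, hTcard, hAT, hTmem, hTev⟩ := chain (k - 1) le_rfl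
  have hT𝓕 : T ⊆ 𝓕 := by
    intro B hB
    rcases hTmem B hB with rfl | ⟨r, hr, h⟩
    · exact hA𝓕
    · exact hIs𝓕 r hr h
  have hTk : T.card = k := by omega
  have hz : ρ ((T.inf id).card % q) = 0 := hρL _ (hint T hT𝓕 hTk)
  have h4 : T.inf id ⊆ A := Finset.inf_le (f := id) hAT
  rw [hev, Finset.inter_eq_right.mpr h4, hz] at hTev
  exact hTev rfl
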